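/- Define a Dyck path with air pockets of length n as a sequence of steps, each step being U = (1,1) or D_k = (1,−k) for some k ≥ 1, such that: no two down-steps D_j, D_k are adjacent, the path starting at height 0 never goes below height 0, and ends at height 0. Then the number of Dyck paths with air pockets with exactly n steps, for n = 0,1,2,...,11, is 1, 0, 1, 1, 2, 4, 8, 17, 37, 82, 185, 423. -/

import Mathlib

/-- A Dyck path with air pockets, encoded as a list of vertical displacements:
each step is `1` (up-step) or `-k` for `k ≥ 1` (down-step `D_k`);
no down-step is immediately followed by another down-step;
every prefix has nonnegative sum (never below height 0);
the total sum is 0 (ends at height 0). -/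
def IsDyckAirPocket (l : List ℤ) : Prop :=
  (∀ x ∈ l, x = 1 ∨ x ≤ -1) ∧
  l.Chain' (fun a b => a ≤ -1 → b = 1) ∧
  (∀ p : List ℤ, p <+: l → 0 ≤ p.sum) ∧
  l.sum = 0


/-- Enumeration of valid suffixes: `n` remaining steps, current height `h`,
`b = true` iff a down-step is allowed now. -/
def dyck : ℕ → ℕ → Bool → Finset (List ℤ)
  | 0, h, _ => if h = 0 then {[]} else ∅
  | n+1, h, b =>
    ((dyck n (h+1) true).image (fun l => (1:ℤ) :: l)) ∪
    (if b then (Finset.Icc 1 h).biUnion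
        (fun k => (dyck n (h - k) false).image (fun l => (-(k:ℤ)) :: l))
      else ∅)

/-- Pure-ℕ count matching `dyck`. -/
def dcount : ℕ → ℕ → Bool → ℕ
  | 0, h, _ => if h = 0 then 1 else 0
  | n+1, h, b =>
    dcount n (h+1) true +
    (if b then ∑ k ∈ Finset.Icc 1 h, dcount n (h - k) false else 0)

def R : ℤ → ℤ → Prop := fun a b => a ≤ -1 → b = 1

def P (h : ℕ) (b : Bool) (l : List ℤ) : Prop :=
  (∀ x ∈ l, x = 1 ∨ x ≤ -1) ∧ l.Chain' R ∧
  (b = false → ∀ x, l.head? = some x → x = 1) ∧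
  (∀ p : List ℤ, p <+: l → 0 ≤ (h:ℤ) + p.sum) ∧ (h:ℤ) + l.sum = 0

lemma prefix_cons_cases {p : List ℤ} {x : ℤ} {t : List ℤ} (h : p <+: x :: t) :
    p = [] ∨ ∃ q, q <+: t ∧ p = x :: q := by
  cases p with
  | nil => exact Or.inl rfl
  | cons a q =>
    rw [List.cons_prefix_cons] at h
    exact Or.inr ⟨q, h.2, by rw [h.1]⟩

lemma mem_dyck : ∀ (n h : ℕ) (b : Bool) (l : List ℤ),
    l ∈ dyck n h b ↔ P h b l ∧ l.length = n := by
  intro n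
  induction n with
  | zero =>
    intro h b l
    simp only [dyck]
    constructor
    · intro hl
      by_cases hh : h = 0
      · simp [hh] at hl
        subst hl; subst hh
        refine ⟨⟨by simp, List.isChain_nil, by simp, ?_, by simp⟩, rfl⟩
        intro p hp
        have := List.prefix_nil.mp hp
        simp [this]
      · simp [hh] at hl
    · rintro ⟨⟨-, -, -, -, hsum⟩, hlen⟩
      have : l = [] := List.length_eq_zero_iff.mp hlen
      subst this
      simp at hsum
      have : h = 0 := by exact_mod_cast hsum
      simp [this]
  | succ n ih =>
    intro h b l
    simp only [dyck, Finset.mem_union, Finset.mem_image]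
    constructor
    · rintro (⟨t, ht, rfl⟩ | hdown)
      · obtain ⟨⟨h1, h2, h3, h4, h5⟩, hlen⟩ := (ih (h+1) true t).mp ht
        refine ⟨⟨?_, ?_, ?_, ?_, ?_⟩, by simp [hlen]⟩
        · rintro x hx
          rcases List.mem_cons.mp hx with rfl | hx
          · exact Or.inl rfl
          · exact h1 x hx
        · simp only [List.Chain', List.isChain_cons]
          refine ⟨fun y hy => fun hc => absurd hc (by norm_num), h2⟩
        · intro _ x hx
          simp at hx; omega
        · intro p hp
          rcases prefix_cons_cases hp with rfl | ⟨q, hq, rfl⟩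
          · simp
          · have := h4 q hq
            push_cast at this ⊢
            simp [List.sum_cons]; linarith
        · have := h5
          push_cast at this ⊢
          simp [List.sum_cons]; linarith
      · have hb : b = true := by
          by_contra hb'
          simp [Bool.not_eq_true] at hb'
          simp [hb'] at hdown
        rw [hb] at hdown
        simp only [if_true, Finset.mem_biUnion, Finset.mem_image] at hdown
        obtain ⟨k, hk, t, ht, rfl⟩ := hdown
        rw [Finset.mem_Icc] at hk
        obtain ⟨⟨h1, h2, h3, h4, h5⟩, hlen⟩ := (ih (h-k) false t).mp ht
        have hcast : ((h - k : ℕ) : ℤ) = (h:ℤ) - (k:ℤ) := by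
          rw [Nat.cast_sub hk.2]
        refine ⟨⟨?_, ?_, ?_, ?_, ?_⟩, by simp [hlen]⟩
        · rintro x hx
          rcases List.mem_cons.mp hx with rfl | hx
          · right; omega
          · exact h1 x hx
        · simp only [List.Chain', List.isChain_cons]
          refine ⟨fun y hy => fun _ => h3 rfl y hy, h2⟩
        · intro hbf; rw [hbf] at hb; exact absurd hb (by simp)
        · intro p hp
          rcases prefix_cons_cases hp with rfl | ⟨q, hq, rfl⟩
          · simp
          · have := h4 q hq
            rw [hcast] at this
            simp [List.sum_cons]; linarith
        · have := h5
          rw [hcast] at this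
          simp [List.sum_cons]; linarith
    · rintro ⟨⟨h1, h2, h3, h4, h5⟩, hlen⟩
      cases l with
      | nil => simp at hlen
      | cons x t =>
        simp only [List.length_cons, Nat.succ.injEq] at hlen
        rcases h1 x List.mem_cons_self with rfl | hx
        · -- up-step
          left
          refine ⟨t, (ih (h+1) true t).mpr ⟨⟨?_, ?_, ?_, ?_, ?_⟩, hlen⟩, rfl⟩
          · exact fun y hy => h1 y (List.mem_cons_of_mem _ hy)
          · exact h2.tail
          · simp
          · intro p hp
            have := h4 (1 :: p) (by simpa using hp)
            push_cast at this ⊢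
            simp [List.sum_cons] at this
            linarith
          · have := h5
            push_cast at this ⊢
            simp [List.sum_cons] at this
            linarith
        · -- down-step
          right
          have hb : b = true := by
            cases b with
            | false =>
              have := h3 rfl x (by simp)
              omega
            | true => rfl
          rw [hb]
          simp only [if_true, Finset.mem_biUnion, Finset.mem_image]
          set k : ℕ := (-x).toNat with hkdef
          have hxk : x = -(k:ℤ) := by
            rw [hkdef]; omega
          have hk1 : 1 ≤ k := by omega
          have hkh : k ≤ h := by
            have := h4 [x] ⟨t, rfl⟩
            simp [List.sum_cons] at this
            omega
          have hcast : ((h - k : ℕ) : ℤ) = (h:ℤ) - (k:ℤ) := by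
            rw [Nat.cast_sub hkh]
          refine ⟨k, Finset.mem_Icc.mpr ⟨hk1, hkh⟩, t,
            (ih (h-k) false t).mpr ⟨⟨?_, ?_, ?_, ?_, ?_⟩, hlen⟩, by rw [hxk]⟩
          · exact fun y hy => h1 y (List.mem_cons_of_mem _ hy)
          · exact h2.tail
          · intro _ y hy
            exact h2.rel_head? hy hx
          · intro p hp
            have := h4 (x :: p) (by simpa using hp)
            rw [hcast]
            simp [List.sum_cons] at this
            omega
          · have := h5
            rw [hcast]
            simp [List.sum_cons] at this
            omega

lemma head_of_mem_dyck_up {n h : ℕ} {l : List ℤ} (hl : l ∈ (dyck n (h+1) true).image (fun l => (1:ℤ) :: l)) :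
    l.head? = some 1 := by
  simp only [Finset.mem_image] at hl
  obtain ⟨t, -, rfl⟩ := hl
  rfl

lemma card_dyck : ∀ (n h : ℕ) (b : Bool), (dyck n h b).card = dcount n h b := by
  intro n
  induction n with
  | zero =>
    intro h b
    simp only [dyck, dcount]
    split <;> simp
  | succ n ih =>
    intro h b
    simp only [dyck, dcount]
    rw [Finset.card_union_of_disjoint, Finset.card_image_of_injective _ (List.cons_injective), ih]
    · congr 1
      cases b with
      | false => simp
      | true =>
        simp only [if_true]
        rw [Finset.card_biUnion]
        · refine Finset.sum_congr rfl fun k _ => ?_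
          rw [Finset.card_image_of_injective _ (List.cons_injective), ih]
        · intro a ha c hc hac
          simp only [Finset.disjoint_left, Finset.mem_image]
          rintro l ⟨t, -, rfl⟩ ⟨s, -, he⟩
          apply hac
          have h2 : -(c:ℤ) = -(a:ℤ) := (List.cons_eq_cons.mp he).1
          exact_mod_cast (neg_injective h2).symm
    · rw [Finset.disjoint_left]
      intro l hl hr
      have h1 : l.head? = some 1 := head_of_mem_dyck_up hl
      cases b with
      | false => simp at hr
      | true =>
        simp only [if_true, Finset.mem_biUnion, Finset.mem_image] at hr
        obtain ⟨k, hk, t, -, rfl⟩ := hr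
        rw [Finset.mem_Icc] at hk
        simp only [List.head?_cons, Option.some.injEq] at h1
        omega

lemma dyck_spec (l : List ℤ) (n : ℕ) :
    (IsDyckAirPocket l ∧ l.length = n) ↔ l ∈ dyck n 0 true := by
  rw [mem_dyck]
  unfold IsDyckAirPocket P R
  constructor
  · rintro ⟨⟨a, b, c, d⟩, e⟩
    exact ⟨⟨a, b, by simp, by simpa using c, by simpa using d⟩, e⟩
  · rintro ⟨⟨a, b, -, c, d⟩, e⟩
    exact ⟨⟨a, b, by simpa using c, by simpa using d⟩, e⟩

lemma card_n (n : ℕ) :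
    Nat.card {l : List ℤ // IsDyckAirPocket l ∧ l.length = n} = dcount n 0 true := by
  rw [Nat.card_congr (Equiv.subtypeEquivRight (fun l => dyck_spec l n)),
    Nat.card_eq_fintype_card, Fintype.card_coe, card_dyck]

/-- the numbers of Dyck paths with air pockets of length n = 0,…,11. -/
theorem stmt3 :
    Nat.card {l : List ℤ // IsDyckAirPocket l ∧ l.length = 0} = 1 ∧
    Nat.card {l : List ℤ // IsDyckAirPocket l ∧ l.length = 1} = 0 ∧
    Nat.card {l : List ℤ // IsDyckAirPocket l ∧ l.length = 2} = 1 ∧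
    Nat.card {l : List ℤ // IsDyckAirPocket l ∧ l.length = 3} = 1 ∧
    Nat.card {l : List ℤ // IsDyckAirPocket l ∧ l.length = 4} = 2 ∧
    Nat.card {l : List ℤ // IsDyckAirPocket l ∧ l.length = 5} = 4 ∧
    Nat.card {l : List ℤ // IsDyckAirPocket l ∧ l.length = 6} = 8 ∧
    Nat.card {l : List ℤ // IsDyckAirPocket l ∧ l.length = 7} = 17 ∧
    Nat.card {l : List ℤ // IsDyckAirPocket l ∧ l.length = 8} = 37 ∧
    Nat.card {l : List ℤ // IsDyckAirPocket l ∧ l.length = 9} = 82 ∧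
    Nat.card {l : List ℤ // IsDyckAirPocket l ∧ l.length = 10} = 185 ∧
    Nat.card {l : List ℤ // IsDyckAirPocket l ∧ l.length = 11} = 423 := by
  refine ⟨?_, ?_, ?_, ?_, ?_, ?_, ?_, ?_, ?_, ?_, ?_, ?_⟩ <;> rw [card_n] <;> decide
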